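/- arXiv:2301.05656 — 2 statements merged into one kernel-verified Lean document; each statement's English description precedes it below -/
import Mathlib

section
/- Let (k_n) be a sequence of natural numbers with k_n = o(n^{2/3}) as n → ∞. Then C(2n, n + k_n) ∼ C(2n, n) · exp(−k_n²/n) as n → ∞, i.e. the ratio C(2n, n + k_n) / (C(2n, n)·exp(−k_n²/n)) tends to 1. -/
open Filter Finset

-- nat identity
lemma choose_prod (n : ℕ) : ∀ k : ℕ, k ≤ n →
    (2*n).choose (n+k) * ∏ j ∈ Finset.range k, (n+j+1) =
    (2*n).choose n * ∏ j ∈ Finset.range k, (n - j) := by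
  intro k
  induction k with
  | zero => simp
  | succ k ih =>
    intro hk
    have hk' : k ≤ n := Nat.le_of_succ_le hk
    rw [Finset.prod_range_succ, Finset.prod_range_succ]
    have h1 : (2*n).choose (n+(k+1)) * (n+k+1) = (2*n).choose (n+k) * (n - k) := by
      have h := Nat.choose_succ_right_eq (2*n) (n+k)
      have h2 : 2*n - (n+k) = n - k := by omega
      rw [h2] at h
      rw [show n+(k+1) = (n+k)+1 by ring]
      convert h using 2
    calc (2*n).choose (n+(k+1)) * ((∏ j ∈ Finset.range k, (n+j+1)) * (n+k+1))
        = ((2*n).choose (n+(k+1)) * (n+k+1)) * ∏ j ∈ Finset.range k, (n+j+1) := by ring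
      _ = ((2*n).choose (n+k) * (n - k)) * ∏ j ∈ Finset.range k, (n+j+1) := by rw [h1]
      _ = ((2*n).choose (n+k) * ∏ j ∈ Finset.range k, (n+j+1)) * (n - k) := by ring
      _ = ((2*n).choose n * ∏ j ∈ Finset.range k, (n - j)) * (n - k) := by rw [ih hk']
      _ = (2*n).choose n * ((∏ j ∈ Finset.range k, (n - j)) * (n - k)) := by ring

-- sum of odds
lemma sum_odd (k : ℕ) : ∑ j ∈ Finset.range k, (2*(j:ℝ)+1) = (k:ℝ)^2 := by
  induction k with
  | zero => simp
  | succ k ih => rw [Finset.sum_range_succ, ih]; push_cast; ring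

-- per-term bound
lemma term_bound (nr jr kr : ℝ) (hj0 : 0 ≤ jr) (hjk : jr + 1 ≤ kr) (hkn : 2*kr ≤ nr) :
    |(2*jr+1)/nr - Real.log ((nr+jr+1)/(nr-jr))| ≤ 4*kr^2/nr^2 := by
  have hk1 : 1 ≤ kr := by linarith
  have hn : 0 < nr := by linarith
  have hnj : 0 < nr - jr := by linarith
  have hy : 0 < (nr+jr+1)/(nr-jr) := by positivity
  have h1 : Real.log ((nr+jr+1)/(nr-jr)) ≤ (2*jr+1)/(nr-jr) := by
    have := Real.log_le_sub_one_of_pos hy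
    have he : (nr+jr+1)/(nr-jr) - 1 = (2*jr+1)/(nr-jr) := by field_simp; ring
    linarith [he ▸ this]
  have h2 : (2*jr+1)/(nr+jr+1) ≤ Real.log ((nr+jr+1)/(nr-jr)) := by
    have := Real.one_sub_inv_le_log_of_pos hy
    have he : 1 - ((nr+jr+1)/(nr-jr))⁻¹ = (2*jr+1)/(nr+jr+1) := by
      rw [inv_div]; field_simp; ring
    linarith [he ▸ this]
  rw [abs_le]
  constructor
  · rw [neg_le, ← sub_nonpos]
    have key : (2*jr+1)/(nr-jr) - (2*jr+1)/nr ≤ 4*kr^2/nr^2 := by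
      rw [div_sub_div _ _ (ne_of_gt hnj) (ne_of_gt hn), div_le_div_iff₀ (by positivity) (by positivity)]
      have A : (2*jr+1)*jr ≤ 2*kr^2 := by nlinarith
      have B : nr ≤ 2*(nr - jr) := by linarith
      nlinarith [mul_le_mul_of_nonneg_right A (sq_nonneg nr),
        mul_le_mul_of_nonneg_left B (by positivity : (0:ℝ) ≤ 2*kr^2*nr)]
    linarith
  · rw [sub_le_iff_le_add]
    have key : (2*jr+1)/nr - (2*jr+1)/(nr+jr+1) ≤ 4*kr^2/nr^2 := by
      rw [div_sub_div _ _ (ne_of_gt hn) (by positivity), div_le_div_iff₀ (by positivity) (by positivity)]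
      have A2 : (2*jr+1)*(jr+1) ≤ 2*kr^2 := by nlinarith
      nlinarith [mul_le_mul_of_nonneg_right A2 (sq_nonneg nr),
        mul_nonneg (mul_nonneg (sq_nonneg kr) hn.le) (by linarith : (0:ℝ) ≤ jr+1),
        mul_nonneg (sq_nonneg kr) (sq_nonneg nr)]
    linarith

/-- If `(k_n)` is a sequence of natural numbers with `k_n = o(n^(2/3))`, then
`C(2n, n + k_n) ∼ C(2n, n) · exp(-k_n²/n)` as `n → ∞`. -/
theorem statement10 (k : ℕ → ℕ)
    (hk : Tendsto (fun n : ℕ => (k n : ℝ) / (n : ℝ) ^ ((2 : ℝ) / 3)) atTop (nhds 0)) :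
    Tendsto (fun n : ℕ =>
        (((2 * n).choose (n + k n) : ℝ)) /
          (((2 * n).choose n : ℝ) * Real.exp (-(k n : ℝ) ^ 2 / (n : ℝ))))
      atTop (nhds 1) := by
  set g : ℕ → ℝ := fun n => ∑ j ∈ Finset.range (k n),
      ((2*(j:ℝ)+1)/(n:ℝ) - Real.log (((n:ℝ)+(j:ℝ)+1)/((n:ℝ)-(j:ℝ)))) with hg
  -- eventually 2 k n ≤ n and 1 ≤ n
  have hev : ∀ᶠ n in atTop, 2 * k n ≤ n ∧ 1 ≤ n := by
    have h1 : ∀ᶠ n in atTop, (k n:ℝ)/(n:ℝ)^((2:ℝ)/3) < 1/2 :=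
      hk.eventually (gt_mem_nhds (by norm_num : (0:ℝ) < 1/2))
    filter_upwards [h1, eventually_ge_atTop 1] with n h1 hn1
    refine ⟨?_, hn1⟩
    have hn0 : (0:ℝ) < n := by exact_mod_cast hn1
    have hr : (n:ℝ)^((2:ℝ)/3) ≤ (n:ℝ) := by
      calc (n:ℝ)^((2:ℝ)/3) ≤ (n:ℝ)^(1:ℝ) :=
            Real.rpow_le_rpow_of_exponent_le (by exact_mod_cast hn1) (by norm_num)
        _ = n := Real.rpow_one _
    have hp : (0:ℝ) < (n:ℝ)^((2:ℝ)/3) := Real.rpow_pos_of_pos hn0 _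
    have hlt : (k n:ℝ) < (n:ℝ)^((2:ℝ)/3)/2 := by
      rw [div_lt_iff₀ hp] at h1; linarith
    have h2 : (2*(k n):ℝ) < n := by push_cast; linarith
    have h3 : 2 * k n < n := by exact_mod_cast h2
    omega
  -- g tends to 0
  have hgz : Tendsto g atTop (nhds 0) := by
    have hb : Tendsto (fun n => 4 * ((k n:ℝ)/(n:ℝ)^((2:ℝ)/3))^3) atTop (nhds 0) := by
      have := (hk.pow 3).const_mul (4:ℝ)
      simpa using this
    apply squeeze_zero_norm' _ hb
    filter_upwards [hev, eventually_ge_atTop 1] with n hn hn1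
    obtain ⟨h2k, _⟩ := hn
    have hn0 : (0:ℝ) < n := by exact_mod_cast hn1
    have hbeq : 4 * ((k n:ℝ)/(n:ℝ)^((2:ℝ)/3))^3 = 4*(k n:ℝ)^3/(n:ℝ)^2 := by
      rw [div_pow, ← Real.rpow_natCast ((n:ℝ)^((2:ℝ)/3)) 3, ← Real.rpow_mul hn0.le]
      norm_num
      ring
    rw [hbeq]
    have hterm : ∀ j ∈ Finset.range (k n),
        |(2*(j:ℝ)+1)/(n:ℝ) - Real.log (((n:ℝ)+(j:ℝ)+1)/((n:ℝ)-(j:ℝ)))| ≤ 4*(k n:ℝ)^2/(n:ℝ)^2 := by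
      intro j hj
      have hjk : j < k n := Finset.mem_range.mp hj
      refine term_bound (n:ℝ) (j:ℝ) (k n:ℝ) (Nat.cast_nonneg j) ?_ ?_
      · exact_mod_cast Nat.succ_le_of_lt hjk
      · exact_mod_cast h2k
    calc ‖g n‖ ≤ ∑ j ∈ Finset.range (k n),
          |(2*(j:ℝ)+1)/(n:ℝ) - Real.log (((n:ℝ)+(j:ℝ)+1)/((n:ℝ)-(j:ℝ)))| :=
            Finset.abs_sum_le_sum_abs _ _
      _ ≤ (Finset.range (k n)).card • (4*(k n:ℝ)^2/(n:ℝ)^2) :=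
            Finset.sum_le_card_nsmul _ _ _ hterm
      _ = 4*(k n:ℝ)^3/(n:ℝ)^2 := by
            rw [Finset.card_range, nsmul_eq_mul]; ring
  -- exp ∘ g tends to 1
  have hexp : Tendsto (fun n => Real.exp (g n)) atTop (nhds 1) := by
    have := (Real.continuous_exp.tendsto 0).comp hgz
    rw [Real.exp_zero] at this; exact this
  -- eventual equality
  refine hexp.congr' ?_
  filter_upwards [hev] with n hn
  obtain ⟨h2k, hn1⟩ := hn
  have hKn : k n ≤ n := by omega
  have hn0 : (0:ℝ) < n := by exact_mod_cast hn1
  set K := k n with hK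
  have hjlt : ∀ j ∈ Finset.range K, (j:ℝ) < (n:ℝ) := by
    intro j hj
    have := Finset.mem_range.mp hj
    exact_mod_cast (by omega : j < n)
  have hT : ∀ j ∈ Finset.range K, 0 < ((n:ℝ)-(j:ℝ))/((n:ℝ)+(j:ℝ)+1) := by
    intro j hj
    have h1 := hjlt j hj
    have h2 : (0:ℝ) < (n:ℝ)-(j:ℝ) := by linarith
    positivity
  have hP : 0 < ∏ j ∈ Finset.range K, ((n:ℝ)+(j:ℝ)+1) :=
    Finset.prod_pos (fun j _ => by positivity)
  have hC0 : (0:ℝ) < ((2*n).choose n : ℝ) := by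
    exact_mod_cast Nat.choose_pos (by omega : n ≤ 2*n)
  have hcast : (((2*n).choose (n+K) : ℝ)) * ∏ j ∈ Finset.range K, ((n:ℝ)+(j:ℝ)+1)
      = (((2*n).choose n : ℝ)) * ∏ j ∈ Finset.range K, ((n:ℝ)-(j:ℝ)) := by
    have h := congrArg (Nat.cast : ℕ → ℝ) (choose_prod n K hKn)
    push_cast at h
    rw [show (∏ i ∈ Finset.range K, ((n - i : ℕ):ℝ)) = ∏ j ∈ Finset.range K, ((n:ℝ)-(j:ℝ)) from
      Finset.prod_congr rfl fun j hj => Nat.cast_sub (by have := Finset.mem_range.mp hj; omega)] at h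
    exact h
  have hC1 : (((2*n).choose (n+K) : ℝ))
      = (((2*n).choose n : ℝ)) * ∏ j ∈ Finset.range K, (((n:ℝ)-(j:ℝ))/((n:ℝ)+(j:ℝ)+1)) := by
    rw [Finset.prod_div_distrib]
    rw [eq_comm, mul_div_assoc', div_eq_iff (ne_of_gt hP), eq_comm]
    linarith [hcast]
  have hprodexp : ∏ j ∈ Finset.range K, (((n:ℝ)-(j:ℝ))/((n:ℝ)+(j:ℝ)+1))
      = Real.exp (∑ j ∈ Finset.range K, Real.log (((n:ℝ)-(j:ℝ))/((n:ℝ)+(j:ℝ)+1))) := by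
    rw [Real.exp_sum]
    exact Finset.prod_congr rfl fun j hj => (Real.exp_log (hT j hj)).symm
  have hglog : g n = ∑ j ∈ Finset.range K, Real.log (((n:ℝ)-(j:ℝ))/((n:ℝ)+(j:ℝ)+1)) + (K:ℝ)^2/(n:ℝ) := by
    simp only [hg, ← hK]
    rw [Finset.sum_sub_distrib, ← Finset.sum_div, sum_odd]
    rw [Finset.sum_congr rfl (fun j (hj : j ∈ Finset.range K) =>
      (by rw [← Real.log_inv, inv_div] :
        Real.log (((n:ℝ)+(j:ℝ)+1)/((n:ℝ)-(j:ℝ))) = - Real.log (((n:ℝ)-(j:ℝ))/((n:ℝ)+(j:ℝ)+1))))]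
    rw [Finset.sum_neg_distrib]
    ring
  show Real.exp (g n) = _
  rw [hglog, Real.exp_add, ← hprodexp, hC1]
  rw [show (-(K:ℝ)^2/(n:ℝ)) = -((K:ℝ)^2/(n:ℝ)) by ring, Real.exp_neg]
  have he : Real.exp ((K:ℝ)^2/(n:ℝ)) ≠ 0 := Real.exp_ne_zero _
  field_simp
end

section
/- Fix θ with 0 < θ ≤ π/4 and let F_θ(x) denote the number of pairs (a, b) of positive integers of opposite parity satisfying a² + b² < x² and b ≤ a·tan(θ). Then F_θ(x) ∼ θ·x²/4 as x → ∞, i.e. F_θ(x)/(θ·x²/4) → 1. -/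
open Filter Real MeasureTheory Set
open scoped ENNReal

namespace S12

noncomputable def sector (θ x : ℝ) : Set (ℝ × ℝ) :=
  {p : ℝ × ℝ | 0 ≤ p.1 ∧ 0 < p.2 ∧ p.1 ^ 2 + p.2 ^ 2 < x ^ 2 ∧ p.2 ≤ p.1 * Real.tan θ}

lemma measurableSet_sector (θ x : ℝ) : MeasurableSet (sector θ x) := by
  unfold sector
  apply MeasurableSet.inter
  · exact measurableSet_le measurable_const measurable_fst
  apply MeasurableSet.inter
  · exact measurableSet_lt measurable_const measurable_snd
  apply MeasurableSet.inter
  · exact measurableSet_lt ((measurable_fst.pow_const 2).add (measurable_snd.pow_const 2))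
      measurable_const
  · exact measurableSet_le measurable_snd (measurable_fst.mul_const _)

lemma sector_subset (θ x : ℝ) (hx : 0 ≤ x) : sector θ x ⊆ Icc 0 x ×ˢ Icc 0 x := by
  rintro ⟨u, v⟩ ⟨h1, h2, h3, _⟩
  dsimp only at h1 h2 h3 ⊢
  have hu2 : u ^ 2 < x ^ 2 := by nlinarith
  have hv2 : v ^ 2 < x ^ 2 := by nlinarith
  exact ⟨⟨h1, by nlinarith⟩, ⟨h2.le, by nlinarith⟩⟩

lemma sector_vol_lt_top (θ x : ℝ) (hx : 0 ≤ x) : volume (sector θ x) < ⊤ := by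
  refine lt_of_le_of_lt (measure_mono (sector_subset θ x hx)) ?_
  rw [Measure.volume_eq_prod, Measure.prod_prod]
  exact ENNReal.mul_lt_top (by simp) (by simp)

lemma sector_mem_iff {θ x : ℝ} (hθ : 0 < θ) (hθ' : θ ≤ π / 4) (hx : 0 < x)
    {r φ : ℝ} (hr : 0 < r) (hφ : φ ∈ Ioo (-π) π) :
    (r * Real.cos φ, r * Real.sin φ) ∈ sector θ x ↔ r < x ∧ 0 < φ ∧ φ ≤ θ := by
  have hθ2 : θ < π / 2 := lt_of_le_of_lt hθ' (by linarith [pi_pos])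
  have htanθ : 0 < Real.tan θ := Real.tan_pos_of_pos_of_lt_pi_div_two hθ hθ2
  constructor
  · rintro ⟨h1, h2, h3, h4⟩
    dsimp only at h1 h2 h3 h4
    have hsin : 0 < Real.sin φ := by nlinarith
    have hφ0 : 0 < φ := by
      by_contra h
      push_neg at h
      have := Real.sin_nonpos_of_nonpos_of_neg_pi_le h hφ.1.le
      linarith
    have hφπ2 : φ < π / 2 := by
      by_contra h
      push_neg at h
      have hc : Real.cos φ ≤ 0 :=
        Real.cos_nonpos_of_pi_div_two_le_of_le h (by linarith [hφ.2, pi_pos])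
      nlinarith [mul_pos hr hsin, mul_nonpos_of_nonpos_of_nonneg
        (mul_nonpos_of_nonneg_of_nonpos hr.le hc) htanθ.le]
    have hcos : 0 < Real.cos φ := Real.cos_pos_of_mem_Ioo ⟨by linarith [pi_pos], hφπ2⟩
    have hφθ : φ ≤ θ := by
      by_contra h
      push_neg at h
      have h5 : Real.tan θ < Real.tan φ :=
        Real.tan_lt_tan_of_nonneg_of_lt_pi_div_two hθ.le hφπ2 h
      rw [Real.tan_eq_sin_div_cos φ, lt_div_iff₀ hcos] at h5
      nlinarith
    have key : (r * Real.cos φ) ^ 2 + (r * Real.sin φ) ^ 2 = r ^ 2 := by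
      linear_combination (r ^ 2) * (Real.sin_sq_add_cos_sq φ)
    have hr2 : r ^ 2 < x ^ 2 := by linarith
    exact ⟨by nlinarith, hφ0, hφθ⟩
  · rintro ⟨h1, h2, h3⟩
    have hφπ2 : φ < π / 2 := lt_of_le_of_lt h3 hθ2
    have hcos : 0 < Real.cos φ := Real.cos_pos_of_mem_Ioo ⟨by linarith [pi_pos], hφπ2⟩
    have hsin : 0 < Real.sin φ := Real.sin_pos_of_pos_of_lt_pi h2 (by linarith [pi_pos])
    have htan : Real.tan φ ≤ Real.tan θ := by
      rcases eq_or_lt_of_le h3 with h | h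
      · rw [h]
      · exact (Real.tan_lt_tan_of_nonneg_of_lt_pi_div_two h2.le hθ2 h).le
    have hs : Real.sin φ = Real.cos φ * Real.tan φ := by
      rw [Real.tan_eq_sin_div_cos]
      field_simp
    refine ⟨by positivity, by positivity, ?_, ?_⟩
    · dsimp only
      have key : (r * Real.cos φ) ^ 2 + (r * Real.sin φ) ^ 2 = r ^ 2 := by
        linear_combination (r ^ 2) * (Real.sin_sq_add_cos_sq φ)
      rw [key]
      nlinarith
    · dsimp only
      calc r * Real.sin φ = r * Real.cos φ * Real.tan φ := by rw [hs]; ring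
        _ ≤ r * Real.cos φ * Real.tan θ := by
            apply mul_le_mul_of_nonneg_left htan (by positivity)

lemma sector_vol {θ x : ℝ} (hθ : 0 < θ) (hθ' : θ ≤ π / 4) (hx : 0 < x) :
    volume (sector θ x) = ENNReal.ofReal (θ * x ^ 2 / 2) := by
  have hπ : (0:ℝ) < π := pi_pos
  have hbox : Ioo (0:ℝ) x ×ˢ Ioc (0:ℝ) θ ⊆ polarCoord.target := by
    rintro ⟨r, φ⟩ ⟨hr, hφ⟩
    exact ⟨hr.1, ⟨by dsimp at hφ ⊢; linarith [hφ.1], by dsimp at hφ ⊢; linarith [hφ.2]⟩⟩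
  have hms := measurableSet_sector θ x
  have h1 : (volume (sector θ x)).toReal
      = ∫ p : ℝ × ℝ, (sector θ x).indicator (fun _ => (1:ℝ)) p := by
    rw [integral_indicator_const (1:ℝ) hms]; simp; rfl
  rw [← integral_comp_polarCoord_symm] at h1
  have h2 : ∀ p ∈ polarCoord.target,
      p.1 • (sector θ x).indicator (fun _ => (1:ℝ)) (polarCoord.symm p)
        = (Ioo (0:ℝ) x ×ˢ Ioc (0:ℝ) θ).indicator (fun q : ℝ × ℝ => q.1) p := by
    rintro ⟨r, φ⟩ ⟨hr, hφ⟩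
    simp only [mem_Ioi] at hr
    have hmem := sector_mem_iff hθ hθ' hx hr hφ
    rw [polarCoord_symm_apply]
    by_cases h : (r * Real.cos φ, r * Real.sin φ) ∈ sector θ x
    · rw [indicator_of_mem h, indicator_of_mem]
      · simp
      · obtain ⟨a, b, c⟩ := hmem.mp h
        exact ⟨⟨hr, a⟩, ⟨b, c⟩⟩
    · rw [indicator_of_notMem h, indicator_of_notMem]
      · simp
      · intro hcon
        exact h (hmem.mpr ⟨hcon.1.2, hcon.2.1, hcon.2.2⟩)
  rw [setIntegral_congr_fun polarCoord.open_target.measurableSet h2] at h1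
  rw [setIntegral_indicator (measurableSet_Ioo.prod measurableSet_Ioc),
    inter_eq_self_of_subset_right hbox] at h1
  have h3 : ∫ p in Ioo (0:ℝ) x ×ˢ Ioc (0:ℝ) θ, p.1
      = (∫ r in Ioo (0:ℝ) x, r) * (∫ φ in Ioc (0:ℝ) θ, (1:ℝ)) := by
    rw [Measure.volume_eq_prod, ← Measure.prod_restrict]
    have := integral_prod_mul (μ := volume.restrict (Ioo (0:ℝ) x))
      (ν := volume.restrict (Ioc (0:ℝ) θ)) (L := ℝ) (fun r => r) (fun _ => (1:ℝ))
    simpa using this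
  have h4 : (∫ r in Ioo (0:ℝ) x, r) = x ^ 2 / 2 := by
    rw [← integral_Ioc_eq_integral_Ioo, ← intervalIntegral.integral_of_le hx.le,
      integral_id]
    ring
  have h5 : (∫ φ in Ioc (0:ℝ) θ, (1:ℝ)) = θ := by
    rw [setIntegral_const]
    simp [Real.volume_Ioc, ENNReal.toReal_ofReal hθ.le, hθ.le]
  rw [h3, h4, h5] at h1
  have hfin := (sector_vol_lt_top θ x hx.le).ne
  rw [← ENNReal.ofReal_toReal hfin, h1]
  ring_nf

/-- volume of a slanted strip of height `c` over `[0, x]`. -/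
lemma strip_vol {f : ℝ → ℝ} (hf : Measurable f) (x : ℝ) {c : ℝ} (hc : 0 ≤ c) :
    volume {p : ℝ × ℝ | p.1 ∈ Icc 0 x ∧ p.2 ∈ Ioo (f p.1) (f p.1 + c)}
      ≤ ENNReal.ofReal (c * x) := by
  set A := {p : ℝ × ℝ | p.1 ∈ Icc 0 x ∧ p.2 ∈ Ioo (f p.1) (f p.1 + c)} with hA
  have hmA : MeasurableSet A := by
    apply MeasurableSet.inter
    · exact measurable_fst measurableSet_Icc
    apply MeasurableSet.inter
    · exact measurableSet_lt (hf.comp measurable_fst) measurable_snd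
    · exact measurableSet_lt measurable_snd ((hf.comp measurable_fst).add_const c)
  rw [Measure.volume_eq_prod, Measure.prod_apply hmA]
  have hsec : ∀ u : ℝ, volume (Prod.mk u ⁻¹' A)
      ≤ (Icc (0:ℝ) x).indicator (fun _ => ENNReal.ofReal c) u := by
    intro u
    by_cases hu : u ∈ Icc (0:ℝ) x
    · rw [indicator_of_mem hu]
      have : Prod.mk u ⁻¹' A ⊆ Ioo (f u) (f u + c) := by
        rintro v ⟨_, hv⟩
        exact hv
      refine le_trans (measure_mono this) ?_
      rw [Real.volume_Ioo]
      exact ENNReal.ofReal_le_ofReal (by linarith)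
    · rw [indicator_of_notMem hu]
      have : Prod.mk u ⁻¹' A = ∅ := by
        ext v
        simp only [mem_preimage, hA, mem_setOf_eq, mem_empty_iff_false, iff_false]
        rintro ⟨h, _⟩
        exact hu h
      simp [this]
  calc ∫⁻ u, volume (Prod.mk u ⁻¹' A)
      ≤ ∫⁻ u, (Icc (0:ℝ) x).indicator (fun _ => ENNReal.ofReal c) u := lintegral_mono hsec
    _ = ENNReal.ofReal c * volume (Icc (0:ℝ) x) := by
        rw [lintegral_indicator measurableSet_Icc, setLIntegral_const]
    _ ≤ ENNReal.ofReal (c * x) := by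
        rw [Real.volume_Icc, ← ENNReal.ofReal_mul hc, sub_zero]
  
def Fset (θ x : ℝ) : Set (ℕ × ℕ) :=
  {p : ℕ × ℕ | 0 < p.1 ∧ 0 < p.2 ∧ p.1 % 2 ≠ p.2 % 2 ∧
      (p.1 : ℝ) ^ 2 + (p.2 : ℝ) ^ 2 < x ^ 2 ∧ (p.2 : ℝ) ≤ (p.1 : ℝ) * Real.tan θ}

lemma Fset_finite (θ x : ℝ) : (Fset θ x).Finite := by
  apply Set.Finite.subset ((Set.finite_Iio (⌈|x|⌉₊ + 1)).prod (Set.finite_Iio (⌈|x|⌉₊ + 1)))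
  rintro ⟨a, b⟩ ⟨h1, h2, h3, h4, h5⟩
  have hb1 : (1:ℝ) ≤ (b:ℝ) := by exact_mod_cast h2
  have ha1 : (1:ℝ) ≤ (a:ℝ) := by exact_mod_cast h1
  have hax : (a:ℝ) < |x| := by nlinarith [abs_nonneg x, sq_abs x]
  have hbx : (b:ℝ) < |x| := by nlinarith [abs_nonneg x, sq_abs x]
  constructor
  · exact lt_of_lt_of_le (Nat.lt_ceil.mpr hax) (Nat.le_succ _)
  · exact lt_of_lt_of_le (Nat.lt_ceil.mpr hbx) (Nat.le_succ _)

lemma tan_le_one {θ : ℝ} (hθ : 0 < θ) (hθ' : θ ≤ π / 4) : Real.tan θ ≤ 1 := by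
  rcases eq_or_lt_of_le hθ' with h | h
  · rw [h, Real.tan_pi_div_four]
  · rw [← Real.tan_pi_div_four]
    exact (Real.tan_lt_tan_of_nonneg_of_lt_pi_div_two hθ.le (by linarith [pi_pos]) h).le

lemma count_upper {θ : ℝ} (hθ : 0 < θ) (hθ' : θ ≤ π / 4) {x : ℝ} (hx : 0 < x) :
    2 * ((Fset θ x).ncard : ℝ) ≤ θ * x ^ 2 / 2 + Real.tan θ * x + 3 * x := by
  have htanθ : 0 < Real.tan θ :=
    Real.tan_pos_of_pos_of_lt_pi_div_two hθ (by linarith [pi_pos])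
  have hfin := Fset_finite θ x
  set F := hfin.toFinset with hF
  set Q : ℕ × ℕ → Set (ℝ × ℝ) :=
    fun p => Ico ((p.1:ℝ) - 1) (p.1:ℝ) ×ˢ Ico ((p.2:ℝ) - 2) (p.2:ℝ) with hQ
  have hmQ : ∀ p, MeasurableSet (Q p) := fun p => measurableSet_Ico.prod measurableSet_Ico
  have hvolQ : ∀ p : ℕ × ℕ, volume (Q p) = 2 := by
    intro p
    rw [hQ]
    rw [Measure.volume_eq_prod, Measure.prod_prod, Real.volume_Ico, Real.volume_Ico]
    have e1 : (p.1:ℝ) - ((p.1:ℝ) - 1) = 1 := by ring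
    have e2 : (p.2:ℝ) - ((p.2:ℝ) - 2) = 2 := by ring
    rw [e1, e2]
    rw [ENNReal.ofReal_one, one_mul, ENNReal.ofReal_ofNat]
  have hdisj : (F : Set (ℕ × ℕ)).PairwiseDisjoint Q := by
    intro p hp q hq hne
    simp only [hF, Set.Finite.coe_toFinset] at hp hq
    obtain ⟨hp1, hp2, hp3, _, _⟩ := hp
    obtain ⟨hq1, hq2, hq3, _, _⟩ := hq
    simp only [Function.onFun]
    rw [Set.disjoint_left]
    rintro ⟨u, v⟩ ⟨hu1, hv1⟩ ⟨hu2, hv2⟩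
    dsimp only at hu1 hv1 hu2 hv2
    have e1 : (p.1:ℝ) < (q.1:ℝ) + 1 := by linarith [hu1.1, hu1.2, hu2.1, hu2.2]
    have e2 : (q.1:ℝ) < (p.1:ℝ) + 1 := by linarith [hu1.1, hu1.2, hu2.1, hu2.2]
    have e3 : (p.2:ℝ) < (q.2:ℝ) + 2 := by linarith [hv1.1, hv1.2, hv2.1, hv2.2]
    have e4 : (q.2:ℝ) < (p.2:ℝ) + 2 := by linarith [hv1.1, hv1.2, hv2.1, hv2.2]
    have n1 : p.1 < q.1 + 1 := by exact_mod_cast e1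
    have n2 : q.1 < p.1 + 1 := by exact_mod_cast e2
    have n3 : p.2 < q.2 + 2 := by exact_mod_cast e3
    have n4 : q.2 < p.2 + 2 := by exact_mod_cast e4
    have : p.1 = q.1 ∧ p.2 = q.2 := by omega
    exact hne (Prod.ext this.1 this.2)
  have hcard : volume (⋃ p ∈ F, Q p) = F.card * 2 := by
    rw [measure_biUnion_finset hdisj (fun p _ => hmQ p)]
    simp [hvolQ, Finset.sum_const, nsmul_eq_mul]
  -- cover
  set A := {p : ℝ × ℝ | p.1 ∈ Icc 0 x ∧
      p.2 ∈ Ioo (p.1 * Real.tan θ) (p.1 * Real.tan θ + Real.tan θ)} with hAdef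
  set B := {p : ℝ × ℝ | p.1 ∈ Icc 0 x ∧ p.2 ∈ Ioo (-2 : ℝ) ((-2) + 3)} with hBdef
  have hcover : (⋃ p ∈ F, Q p) ⊆ sector θ x ∪ A ∪ B := by
    intro z hz
    simp only [Set.mem_iUnion] at hz
    obtain ⟨p, hpF, hzQ⟩ := hz
    have hp : p ∈ Fset θ x := by rwa [hF, Set.Finite.mem_toFinset] at hpF
    obtain ⟨hp1, hp2, _, hp4, hp5⟩ := hp
    obtain ⟨u, v⟩ := z
    obtain ⟨hu, hv⟩ := hzQ
    dsimp only at hu hv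
    have ha1 : (1:ℝ) ≤ (p.1:ℝ) := by exact_mod_cast hp1
    have hb1 : (1:ℝ) ≤ (p.2:ℝ) := by exact_mod_cast hp2
    have hax : (p.1:ℝ) < x := by nlinarith
    have hu0 : 0 ≤ u := by linarith [hu.1]
    have hux : u ≤ x := by linarith [hu.2]
    rcases le_or_gt v 0 with hv0 | hv0
    · right
      exact ⟨⟨hu0, hux⟩, ⟨by linarith [hv.1], by linarith⟩⟩
    rcases le_or_gt v (u * Real.tan θ) with hvs | hvs
    · left; left
      refine ⟨hu0, hv0, ?_, hvs⟩
      have h1 : u ^ 2 < (p.1:ℝ) ^ 2 := by nlinarith [hu.1, hu.2]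
      have h2 : v ^ 2 < (p.2:ℝ) ^ 2 := by nlinarith [hv.1, hv.2]
      dsimp only
      nlinarith
    · left; right
      refine ⟨⟨hu0, hux⟩, hvs, ?_⟩
      have : (p.1:ℝ) ≤ u + 1 := by linarith [hu.1]
      have h2 : (p.2:ℝ) ≤ (p.1:ℝ) * Real.tan θ := hp5
      have : (p.1:ℝ) * Real.tan θ ≤ (u + 1) * Real.tan θ :=
        mul_le_mul_of_nonneg_right this htanθ.le
      dsimp only
      nlinarith [hv.2]
  -- put together in ENNReal
  have hvA : volume A ≤ ENNReal.ofReal (Real.tan θ * x) :=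
    strip_vol (measurable_id.mul_const _) x htanθ.le
  have hvB : volume B ≤ ENNReal.ofReal (3 * x) := by
    exact strip_vol (f := fun _ => (-2:ℝ)) measurable_const x (c := 3) (by norm_num)
  have hchain : (F.card * 2 : ℝ≥0∞)
      ≤ ENNReal.ofReal (θ * x ^ 2 / 2) + ENNReal.ofReal (Real.tan θ * x)
        + ENNReal.ofReal (3 * x) := by
    rw [← hcard]
    calc volume (⋃ p ∈ F, Q p) ≤ volume (sector θ x ∪ A ∪ B) := measure_mono hcover
      _ ≤ volume (sector θ x ∪ A) + volume B := measure_union_le _ _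
      _ ≤ volume (sector θ x) + volume A + volume B := by
          gcongr
          exact measure_union_le _ _
      _ ≤ _ := by
          rw [sector_vol hθ hθ' hx]
          gcongr
  have hofreal : (F.card * 2 : ℝ≥0∞) = ENNReal.ofReal (2 * ((Fset θ x).ncard : ℝ)) := by
    rw [Set.ncard_eq_toFinset_card _ hfin]
    rw [show (2 : ℝ) * (F.card : ℝ) = ((2 * F.card : ℕ) : ℝ) by push_cast; ring]
    rw [ENNReal.ofReal_natCast]
    push_cast
    ring
  rw [hofreal, ← ENNReal.ofReal_add (by positivity) (by positivity),
    ← ENNReal.ofReal_add (by positivity) (by positivity)] at hchain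
  rw [ENNReal.ofReal_le_ofReal_iff (by positivity)] at hchain
  linarith

lemma count_lower {θ : ℝ} (hθ : 0 < θ) (hθ' : θ ≤ π / 4) {x : ℝ} (hx : 2 ≤ x) :
    θ * (x - 1) ^ 2 / 2 ≤ 2 * ((Fset θ x).ncard : ℝ) + 4 * x := by
  have htanθ : 0 < Real.tan θ :=
    Real.tan_pos_of_pos_of_lt_pi_div_two hθ (by linarith [pi_pos])
  have hfin := Fset_finite θ x
  set F := hfin.toFinset with hF
  set Q : ℕ × ℕ → Set (ℝ × ℝ) :=
    fun p => Ico ((p.1:ℝ) - 1) (p.1:ℝ) ×ˢ Ioc (p.2:ℝ) ((p.2:ℝ) + 2) with hQ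
  have hvolQ : ∀ p : ℕ × ℕ, volume (Q p) = 2 := by
    intro p
    rw [hQ]
    rw [Measure.volume_eq_prod, Measure.prod_prod, Real.volume_Ico, Real.volume_Ioc]
    have e1 : (p.1:ℝ) - ((p.1:ℝ) - 1) = 1 := by ring
    have e2 : (p.2:ℝ) + 2 - (p.2:ℝ) = 2 := by ring
    rw [e1, e2]
    rw [ENNReal.ofReal_one, one_mul, ENNReal.ofReal_ofNat]
  set L := {p : ℝ × ℝ | 0 ≤ p.1 ∧ 3 ≤ p.2 ∧ (p.1 + 1) ^ 2 + p.2 ^ 2 < x ^ 2 ∧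
      p.2 ≤ p.1 * Real.tan θ} with hLdef
  have hsub : L ⊆ ⋃ p ∈ F, Q p := by
    rintro ⟨u, v⟩ ⟨hu0, hv3, huv, hvt⟩
    dsimp only at hu0 hv3 huv hvt
    set a : ℕ := ⌊u⌋.toNat + 1 with ha
    set m : ℕ := ⌈v⌉.toNat with hm
    have hfl0 : (0:ℤ) ≤ ⌊u⌋ := Int.le_floor.mpr (by exact_mod_cast hu0)
    have haR : (a : ℝ) = (⌊u⌋ : ℝ) + 1 := by
      have h1 : ((⌊u⌋.toNat : ℕ) : ℝ) = ((⌊u⌋ : ℤ) : ℝ) := by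
        rw [← Int.cast_natCast, Int.toNat_of_nonneg hfl0]
      rw [ha]
      push_cast
      rw [show ((⌊u⌋.toNat : ℕ) : ℝ) = ((⌊u⌋ : ℤ) : ℝ) from h1]
    have hua : u < (a:ℝ) := by rw [haR]; linarith [Int.lt_floor_add_one u]
    have hau : (a:ℝ) ≤ u + 1 := by rw [haR]; linarith [Int.floor_le u]
    have hau' : (a:ℝ) - 1 ≤ u := by rw [haR]; linarith [Int.floor_le u]
    have hcl0 : (3:ℤ) ≤ ⌈v⌉ := by
      have : (3:ℝ) ≤ (⌈v⌉ : ℝ) := le_trans hv3 (Int.le_ceil v)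
      exact_mod_cast this
    have hmZ : ((m : ℕ) : ℤ) = ⌈v⌉ := by
      rw [hm]
      exact Int.toNat_of_nonneg (by linarith)
    have hmR : ((m : ℕ) : ℝ) = ((⌈v⌉ : ℤ) : ℝ) := by exact_mod_cast hmZ
    have hm3 : 3 ≤ m := by omega
    have hvm : v ≤ (m:ℝ) := by rw [hmR]; exact Int.le_ceil v
    have hmv : (m:ℝ) < v + 1 := by rw [hmR]; exact_mod_cast Int.ceil_lt_add_one v
    set b : ℕ := if (m - 1) % 2 ≠ a % 2 then m - 1 else m - 2 with hb
    have hbpar : b % 2 ≠ a % 2 := by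
      rw [hb]
      split_ifs with h
      · exact h
      · omega
    have hb1 : 1 ≤ b := by rw [hb]; split_ifs <;> omega
    have hblo : (m:ℝ) - 2 ≤ (b:ℝ) := by
      rw [hb]
      split_ifs <;> · push_cast [Nat.cast_sub (by omega : 1 ≤ m), Nat.cast_sub (by omega : 2 ≤ m)]
                      linarith
    have hbhi : (b:ℝ) ≤ (m:ℝ) - 1 := by
      rw [hb]
      split_ifs <;> · push_cast [Nat.cast_sub (by omega : 1 ≤ m), Nat.cast_sub (by omega : 2 ≤ m)]
                      linarith
    have hbv : (b:ℝ) < v := by linarith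
    have hvb : v ≤ (b:ℝ) + 2 := by linarith
    have hmemF : (a, b) ∈ Fset θ x := by
      refine ⟨by omega, by omega, ?_, ?_, ?_⟩
      · omega
      · have ha0 : (0:ℝ) < (a:ℝ) := by positivity
        have hb0 : (0:ℝ) < (b:ℝ) := by exact_mod_cast hb1
        dsimp only
        nlinarith
      · dsimp only
        have : u * Real.tan θ ≤ (a:ℝ) * Real.tan θ :=
          mul_le_mul_of_nonneg_right hua.le htanθ.le
        linarith
    refine Set.mem_biUnion (hfin.mem_toFinset.mpr hmemF) ?_
    exact ⟨⟨hau', hua⟩, ⟨hbv, hvb⟩⟩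
  set D := {p : ℝ × ℝ | p.1 ∈ Icc 0 x ∧ p.2 ∈ Ioo (-1 : ℝ) ((-1) + 4)} with hDdef
  have hsec : sector θ (x - 1) ⊆ L ∪ D := by
    rintro ⟨u, v⟩ ⟨hu0, hv0, hr, ht⟩
    dsimp only at hu0 hv0 hr ht
    have hux : u < x - 1 := by nlinarith
    rcases le_or_gt 3 v with h3 | h3
    · left
      exact ⟨hu0, h3, by dsimp only; nlinarith, ht⟩
    · right
      exact ⟨⟨hu0, by linarith⟩, ⟨by linarith, by dsimp only; linarith⟩⟩
  have hvD : volume D ≤ ENNReal.ofReal (4 * x) :=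
    strip_vol (f := fun _ => (-1:ℝ)) measurable_const x (c := 4) (by norm_num)
  have hvL : volume L ≤ (F.card * 2 : ℝ≥0∞) := by
    refine le_trans (measure_mono hsub) ?_
    refine le_trans (measure_biUnion_finset_le F Q) ?_
    simp [hvolQ, Finset.sum_const, nsmul_eq_mul]
  have hchain : ENNReal.ofReal (θ * (x - 1) ^ 2 / 2)
      ≤ (F.card * 2 : ℝ≥0∞) + ENNReal.ofReal (4 * x) := by
    rw [← sector_vol hθ hθ' (by linarith : (0:ℝ) < x - 1)]
    calc volume (sector θ (x - 1)) ≤ volume (L ∪ D) := measure_mono hsec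
      _ ≤ volume L + volume D := measure_union_le _ _
      _ ≤ _ := by gcongr
  have hofreal : (F.card * 2 : ℝ≥0∞) = ENNReal.ofReal (2 * ((Fset θ x).ncard : ℝ)) := by
    rw [Set.ncard_eq_toFinset_card _ hfin]
    rw [show (2 : ℝ) * ((F.card : ℕ) : ℝ) = ((2 * F.card : ℕ) : ℝ) by push_cast; ring]
    rw [ENNReal.ofReal_natCast]
    push_cast
    ring
  rw [hofreal, ← ENNReal.ofReal_add (by positivity) (by positivity)] at hchain
  rw [ENNReal.ofReal_le_ofReal_iff (by positivity)] at hchain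
  linarith


end S12

open S12
/-- Fix `0 < θ ≤ π/4` and let `F_θ(x)` be the number of pairs `(a, b)` of positive
integers of opposite parity with `a² + b² < x²` and `b ≤ a·tan θ`. Then
`F_θ(x) ∼ θ·x²/4` as `x → ∞`. -/
theorem statement12 (θ : ℝ) (hθ : 0 < θ) (hθ' : θ ≤ π / 4) :
    Tendsto (fun x : ℝ =>
        (({p : ℕ × ℕ | 0 < p.1 ∧ 0 < p.2 ∧ p.1 % 2 ≠ p.2 % 2 ∧
            (p.1 : ℝ) ^ 2 + (p.2 : ℝ) ^ 2 < x ^ 2 ∧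
            (p.2 : ℝ) ≤ (p.1 : ℝ) * Real.tan θ}.ncard : ℝ)) / (θ * x ^ 2 / 4))
      atTop (nhds 1) := by
  show Tendsto (fun x : ℝ => ((Fset θ x).ncard : ℝ) / (θ * x ^ 2 / 4)) atTop (nhds 1)
  have htan1 : Real.tan θ ≤ 1 := tan_le_one hθ hθ'
  have h0 : Tendsto (fun x : ℝ => x⁻¹) atTop (nhds (0:ℝ)) := tendsto_inv_atTop_zero
  have hlo : Tendsto (fun x : ℝ => (1 - x⁻¹) ^ 2 - 8 / θ * x⁻¹) atTop (nhds 1) := by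
    have := ((tendsto_const_nhds (x := (1:ℝ)).sub h0).pow 2).sub (h0.const_mul (8/θ))
    simpa using this
  have hhi : Tendsto (fun x : ℝ => 1 + 8 / θ * x⁻¹) atTop (nhds 1) := by
    have := (tendsto_const_nhds (x := (1:ℝ))).add (h0.const_mul (8/θ))
    simpa using this
  refine tendsto_of_tendsto_of_tendsto_of_le_of_le' hlo hhi ?_ ?_
  · filter_upwards [eventually_ge_atTop (2:ℝ)] with x hx
    have hc := count_lower hθ hθ' hx
    have hpos : (0:ℝ) < θ * x ^ 2 / 4 := by positivity
    rw [le_div_iff₀ hpos]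
    have hx0 : x ≠ 0 := by intro h; rw [h] at hx; norm_num at hx
    have he : ((1 - x⁻¹) ^ 2 - 8 / θ * x⁻¹) * (θ * x ^ 2 / 4)
        = θ * (x - 1) ^ 2 / 4 - 2 * x := by
      field_simp
      ring
    rw [he]
    linarith
  · filter_upwards [eventually_ge_atTop (2:ℝ)] with x hx
    have hc := count_upper hθ hθ' (by linarith : (0:ℝ) < x)
    have hpos : (0:ℝ) < θ * x ^ 2 / 4 := by positivity
    rw [div_le_iff₀ hpos]
    have hx0 : x ≠ 0 := by intro h; rw [h] at hx; norm_num at hx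
    have he : (1 + 8 / θ * x⁻¹) * (θ * x ^ 2 / 4) = θ * x ^ 2 / 4 + 2 * x := by
      field_simp
      ring
    rw [he]
    have htx : Real.tan θ * x ≤ x := by nlinarith
    linarith
end
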